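/- Let A be an m×n integer matrix with rank(A) = n, let b ∈ ℚᵐ, and let P = {x ∈ ℝⁿ : A x ≤ b}. Define γ₁(A) as the maximum, over all nonsingular square submatrices B of A, of the maximum ℓ₁-norm of a row of B, and γ_∞(A) as the maximum, over all nonsingular square submatrices B of A, of the maximum ℓ₁-norm of a column of B. Then the set of vertices (extreme points) of P is finite and |vertices(P)| ≤ 2ⁿ · (min{γ₁(A), γ_∞(A)})ⁿ ≤ (2‖A‖_max)ⁿ · s(A)ⁿ, where ‖A‖_max = max_{i,j}|A_{ij}| and s(A) is the minimum of the two quantities: the maximum number of nonzero entries in a row of a nonsingular square submatrix of A, and the maximum number of nonzero entries in a column of a nonsingular square submatrix of A. -/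

import Mathlib

open Matrix
open scoped Classical

/-- `γ₁(A)`: the maximum, over all nonsingular square submatrices `B` of `A`, of the
maximum `ℓ₁`-norm of a row of `B`. -/
noncomputable def gammaRow (m n : ℕ) (A : Matrix (Fin m) (Fin n) ℤ) : ℕ :=
  sSup {x : ℕ | ∃ (k : ℕ) (r : Fin k ↪ Fin m) (c : Fin k ↪ Fin n),
    (A.submatrix r c).det ≠ 0 ∧
    x = Finset.univ.sup fun i : Fin k => ∑ j : Fin k, (A.submatrix r c i j).natAbs}

/-- `γ_∞(A)`: the maximum, over all nonsingular square submatrices `B` of `A`, of the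
maximum `ℓ₁`-norm of a column of `B`. -/
noncomputable def gammaCol (m n : ℕ) (A : Matrix (Fin m) (Fin n) ℤ) : ℕ :=
  sSup {x : ℕ | ∃ (k : ℕ) (r : Fin k ↪ Fin m) (c : Fin k ↪ Fin n),
    (A.submatrix r c).det ≠ 0 ∧
    x = Finset.univ.sup fun j : Fin k => ∑ i : Fin k, (A.submatrix r c i j).natAbs}

/-- The maximum number of nonzero entries in a row of a nonsingular square submatrix of `A`. -/
noncomputable def weakRowSparsity (m n : ℕ) (A : Matrix (Fin m) (Fin n) ℤ) : ℕ :=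
  sSup {x : ℕ | ∃ (k : ℕ) (r : Fin k ↪ Fin m) (c : Fin k ↪ Fin n),
    (A.submatrix r c).det ≠ 0 ∧
    x = Finset.univ.sup fun i : Fin k =>
      (Finset.univ.filter fun j : Fin k => A.submatrix r c i j ≠ 0).card}

/-- The maximum number of nonzero entries in a column of a nonsingular square submatrix of `A`. -/
noncomputable def weakColSparsity (m n : ℕ) (A : Matrix (Fin m) (Fin n) ℤ) : ℕ :=
  sSup {x : ℕ | ∃ (k : ℕ) (r : Fin k ↪ Fin m) (c : Fin k ↪ Fin n),
    (A.submatrix r c).det ≠ 0 ∧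
    x = Finset.univ.sup fun j : Fin k =>
      (Finset.univ.filter fun i : Fin k => A.submatrix r c i j ≠ 0).card}

/-- `‖A‖_max`: the maximum absolute value of an entry of `A`. -/
def maxNorm (m n : ℕ) (A : Matrix (Fin m) (Fin n) ℤ) : ℕ :=
  Finset.univ.sup fun i : Fin m => Finset.univ.sup fun j : Fin n => (A i j).natAbs

open MeasureTheory
open scoped ENNReal

section AuxPart

variable {m n : ℕ}


private lemma span_tight_rows (M : Matrix (Fin m) (Fin n) ℝ) (c : Fin m → ℝ) {v : Fin n → ℝ}
    (hv : v ∈ Set.extremePoints ℝ {x : Fin n → ℝ | ∀ i, M i ⬝ᵥ x ≤ c i}) :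
    Submodule.span ℝ (M '' {i | M i ⬝ᵥ v = c i}) = ⊤ := by
  by_contra hne
  obtain ⟨f, hf0, hfker⟩ := Submodule.exists_dual_map_eq_bot_of_lt_top
    (lt_top_iff_ne_top.mpr hne) inferInstance
  set d : Fin n → ℝ := fun j => f (fun j' => if j = j' then 1 else 0) with hd
  have hfx : ∀ x : Fin n → ℝ, f x = x ⬝ᵥ d := by
    intro x
    rw [LinearMap.pi_apply_eq_sum_univ f x]
    simp [dotProduct, hd, smul_eq_mul]
  have hd0 : d ≠ 0 := by
    intro h
    apply hf0
    ext x
    simp [hfx, h, dotProduct]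
  have htight : ∀ i, M i ⬝ᵥ v = c i → M i ⬝ᵥ d = 0 := by
    intro i hi
    have : f (M i) ∈ Submodule.map f (Submodule.span ℝ (M '' {i | M i ⬝ᵥ v = c i})) :=
      Submodule.mem_map_of_mem (Submodule.subset_span ⟨i, hi, rfl⟩)
    rw [hfker] at this
    simpa [hfx] using this
  have hvP : ∀ i, M i ⬝ᵥ v ≤ c i := hv.1
  -- choose ε
  set s : Finset (Fin m) := Finset.univ.filter (fun i => M i ⬝ᵥ v ≠ c i) with hs
  set ε : ℝ := if h : s.Nonempty then
      min 1 (s.inf' h fun i => (c i - M i ⬝ᵥ v) / (|M i ⬝ᵥ d| + 1)) else 1 with hε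
  have hεpos : 0 < ε := by
    rw [hε]
    split_ifs with h
    · refine lt_min one_pos ?_
      rw [Finset.lt_inf'_iff]
      intro i hi
      have hlt : M i ⬝ᵥ v < c i := lt_of_le_of_ne (hvP i) (by simpa [hs] using hi)
      have : (0:ℝ) < |M i ⬝ᵥ d| + 1 := by positivity
      exact div_pos (by linarith) this
    · exact one_pos
  have hkey : ∀ i, ∀ t : ℝ, |t| ≤ ε → M i ⬝ᵥ (v + t • d) ≤ c i := by
    intro i t ht
    rw [dotProduct_add, dotProduct_smul, smul_eq_mul]
    by_cases hi : M i ⬝ᵥ v = c i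
    · rw [htight i hi, mul_zero, add_zero, hi]
    · have his : i ∈ s := by simp [hs, hi]
      have hne' : s.Nonempty := ⟨i, his⟩
      have hεle : ε ≤ (c i - M i ⬝ᵥ v) / (|M i ⬝ᵥ d| + 1) := by
        rw [hε, dif_pos hne']
        exact (min_le_right _ _).trans (le_refl _) |>.trans (Finset.inf'_le _ his) |>.trans (le_refl _)
      have hpos : (0:ℝ) < |M i ⬝ᵥ d| + 1 := by positivity
      have h1 : t * (M i ⬝ᵥ d) ≤ ε * (|M i ⬝ᵥ d| + 1) := by
        calc t * (M i ⬝ᵥ d) ≤ |t * (M i ⬝ᵥ d)| := le_abs_self _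
          _ = |t| * |M i ⬝ᵥ d| := abs_mul _ _
          _ ≤ ε * (|M i ⬝ᵥ d| + 1) := by
              apply mul_le_mul ht (by linarith [le_refl (|M i ⬝ᵥ d|)]) (abs_nonneg _) hεpos.le
      have h2 : ε * (|M i ⬝ᵥ d| + 1) ≤ c i - M i ⬝ᵥ v := by
        rw [← div_mul_cancel₀ (c i - M i ⬝ᵥ v) hpos.ne']
        exact mul_le_mul_of_nonneg_right hεle hpos.le
      linarith
  have hx1 : (v - ε • d) ∈ {x : Fin n → ℝ | ∀ i, M i ⬝ᵥ x ≤ c i} := by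
    intro i
    have := hkey i (-ε) (by rw [abs_neg, abs_of_pos hεpos])
    simpa [sub_eq_add_neg, neg_smul] using this
  have hx2 : (v + ε • d) ∈ {x : Fin n → ℝ | ∀ i, M i ⬝ᵥ x ≤ c i} := by
    intro i
    exact hkey i ε (by rw [abs_of_pos hεpos])
  have hseg : v ∈ openSegment ℝ (v - ε • d) (v + ε • d) := by
    refine ⟨1/2, 1/2, by norm_num, by norm_num, by norm_num, ?_⟩
    funext j
    simp only [Pi.add_apply, Pi.smul_apply, Pi.sub_apply, smul_eq_mul]
    ring
  have := hv.2 hx1 hx2 hseg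
  apply hd0
  have h0 : ε • d = 0 := by
    have : v - ε • d = v := this
    funext j
    have := congrFun this j
    simp only [Pi.sub_apply, Pi.smul_apply, smul_eq_mul] at this
    simp only [Pi.zero_apply, Pi.smul_apply, smul_eq_mul]
    linarith
  funext j
  have := congrFun h0 j
  simp only [Pi.smul_apply, smul_eq_mul, Pi.zero_apply] at this
  have := mul_eq_zero.mp this
  rcases this with h | h
  · exact absurd h hεpos.ne'
  · simpa using h



private lemma exists_invertible_subsystem (M : Matrix (Fin m) (Fin n) ℝ) (T : Set (Fin m))
    (hspan : Submodule.span ℝ (M '' T) = ⊤) :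
    ∃ r : Fin n ↪ Fin m, (∀ k, r k ∈ T) ∧ (M.submatrix r id).det ≠ 0 := by
  obtain ⟨sb, hsub, hspan', hind⟩ := exists_linearIndependent ℝ (M '' T)
  have hstop : Submodule.span ℝ sb = ⊤ := by rw [hspan', hspan]
  have hfin : sb.Finite := by
    have : Finite sb := hind.finite
    exact Set.toFinite sb
  haveI : Fintype sb := hfin.fintype
  let bs : Module.Basis sb ℝ (Fin n → ℝ) := Module.Basis.mk hind (by rw [Subtype.range_coe, hstop])
  have hcard : Fintype.card sb = n := by
    have h1 := Module.finrank_eq_card_basis bs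
    rw [Module.finrank_pi ℝ] at h1
    simpa using h1.symm
  choose φ hφT hφ using fun x : sb => (Set.mem_image _ _ _).mp (hsub x.2)
  have hinj : Function.Injective φ := by
    intro x y h
    apply Subtype.ext
    rw [← hφ x, ← hφ y, h]
  let e : Fin n ≃ sb := (Fintype.equivFinOfCardEq hcard).symm
  refine ⟨⟨φ ∘ e, hinj.comp e.injective⟩, fun k => hφT (e k), ?_⟩
  have hrows : LinearIndependent ℝ (fun k : Fin n => (M.submatrix (φ ∘ e) id) k) := by
    have heq : (fun k : Fin n => (M.submatrix (φ ∘ e) id) k)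
        = (fun x : sb => (x : Fin n → ℝ)) ∘ e := by
      funext k
      show M (φ (e k)) = ((e k : Fin n → ℝ))
      rw [hφ (e k)]
    rw [heq]
    exact hind.comp e e.injective
  have : IsUnit (M.submatrix (⟨φ ∘ e, hinj.comp e.injective⟩ : Fin n ↪ Fin m) id) :=
    linearIndependent_rows_iff_isUnit.mp hrows
  have := (Matrix.isUnit_iff_isUnit_det _).mp this
  exact this.ne_zero

private lemma key_ineq (M : Matrix (Fin m) (Fin n) ℝ) (c : Fin m → ℝ) (r : Fin n ↪ Fin m)
    {v x : Fin n → ℝ} (hx : ∀ i, M i ⬝ᵥ x ≤ c i)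
    (htight : ∀ k, M (r k) ⬝ᵥ v = c (r k))
    {lam : Fin n → ℝ} (hlam : ∀ k, 0 < lam k) :
    (lam ᵥ* M.submatrix r id) ⬝ᵥ x ≤ (lam ᵥ* M.submatrix r id) ⬝ᵥ v ∧
    ((lam ᵥ* M.submatrix r id) ⬝ᵥ x = (lam ᵥ* M.submatrix r id) ⬝ᵥ v →
      ∀ k, M (r k) ⬝ᵥ x = c (r k)) := by
  have hre : ∀ y : Fin n → ℝ, (lam ᵥ* M.submatrix r id) ⬝ᵥ y
      = ∑ k, lam k * (M (r k) ⬝ᵥ y) := by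
    intro y
    rw [← Matrix.dotProduct_mulVec]
    simp [dotProduct, Matrix.mulVec, dotProduct]
  have hterm : ∀ k, lam k * (M (r k) ⬝ᵥ x) ≤ lam k * (M (r k) ⬝ᵥ v) := by
    intro k
    rw [htight k]
    exact mul_le_mul_of_nonneg_left (hx (r k)) (hlam k).le
  constructor
  · rw [hre, hre]
    exact Finset.sum_le_sum (fun k _ => hterm k)
  · intro heq k
    rw [hre, hre] at heq
    have := (Finset.sum_eq_sum_iff_of_le (fun k _ => hterm k)).mp heq k (Finset.mem_univ k)
    have := mul_left_cancel₀ (hlam k).ne' this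
    rw [this, htight k]

private lemma cone_disjoint (M : Matrix (Fin m) (Fin n) ℝ) (c : Fin m → ℝ)
    {v w : Fin n → ℝ} (hvw : v ≠ w)
    (hvP : ∀ i, M i ⬝ᵥ v ≤ c i) (hwP : ∀ i, M i ⬝ᵥ w ≤ c i)
    (rv rw' : Fin n ↪ Fin m)
    (hdv : (M.submatrix rv id).det ≠ 0)
    (htv : ∀ k, M (rv k) ⬝ᵥ v = c (rv k)) (htw : ∀ k, M (rw' k) ⬝ᵥ w = c (rw' k)) :
    Disjoint ((M.submatrix rv id).vecMulLinear '' {lam | ∀ k, 0 < lam k})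
      ((M.submatrix rw' id).vecMulLinear '' {lam | ∀ k, 0 < lam k}) := by
  rw [Set.disjoint_iff_inter_eq_empty, Set.eq_empty_iff_forall_notMem]
  rintro p ⟨⟨lam, hlam, hlamp⟩, ⟨mu, hmu, hmup⟩⟩
  have hlamp : lam ᵥ* M.submatrix rv id = p := hlamp
  have hmup : mu ᵥ* M.submatrix rw' id = p := hmup
  have h1 := key_ineq M c rv hwP htv hlam
  have h2 := key_ineq M c rw' hvP htw hmu
  rw [hlamp] at h1
  rw [hmup] at h2
  have heq : p ⬝ᵥ w = p ⬝ᵥ v := le_antisymm h1.1 h2.1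
  have htight : ∀ k, M (rv k) ⬝ᵥ w = c (rv k) := h1.2 heq
  -- now w = v by injectivity of the system
  apply hvw
  have hU : IsUnit (M.submatrix rv id) := (Matrix.isUnit_iff_isUnit_det _).mpr hdv.isUnit
  apply Matrix.mulVec_injective_iff_isUnit.mpr hU
  funext k
  show (M.submatrix rv id *ᵥ v) k = (M.submatrix rv id *ᵥ w) k
  have hv' : (M.submatrix rv id *ᵥ v) k = M (rv k) ⬝ᵥ v := by
    simp [Matrix.mulVec, dotProduct]
  have hw' : (M.submatrix rv id *ᵥ w) k = M (rv k) ⬝ᵥ w := by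
    simp [Matrix.mulVec, dotProduct]
  rw [hv', hw', htv k, htight k]


private lemma vecMulLinear_eq_mulVecLin (B : Matrix (Fin n) (Fin n) ℝ) :
    B.vecMulLinear = Bᵀ.mulVecLin := by
  apply LinearMap.ext
  intro x
  funext j
  show (x ᵥ* B) j = (Bᵀ *ᵥ x) j
  rw [← Matrix.vecMul_transpose, Matrix.transpose_transpose]

private lemma volume_image_vecMulLinear (B : Matrix (Fin n) (Fin n) ℝ) (s : Set (Fin n → ℝ)) :
    volume (B.vecMulLinear '' s) = ENNReal.ofReal |B.det| * volume s := by
  rw [vecMulLinear_eq_mulVecLin]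
  have : Bᵀ.mulVecLin = Matrix.toLin' Bᵀ := rfl
  rw [this, Measure.addHaar_image_linearMap, LinearMap.det_toLin', Matrix.det_transpose]

private lemma isOpen_image_vecMulLinear (B : Matrix (Fin n) (Fin n) ℝ) (hdet : B.det ≠ 0)
    {s : Set (Fin n → ℝ)} (hs : IsOpen s) : IsOpen (B.vecMulLinear '' s) := by
  have hU : IsUnit Bᵀ := (Matrix.isUnit_iff_isUnit_det _).mpr
    (by rw [Matrix.det_transpose]; exact hdet.isUnit)
  let e : (Fin n → ℝ) ≃ₗ[ℝ] (Fin n → ℝ) :=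
    Matrix.toLinearEquiv' Bᵀ (Matrix.invertibleOfIsUnitDet _ ((Matrix.isUnit_iff_isUnit_det _).mp hU))
  have he : ⇑B.vecMulLinear = ⇑e := by
    rw [vecMulLinear_eq_mulVecLin]
    rfl
  rw [he, show ⇑e '' s = ⇑e.symm ⁻¹' s from e.image_eq_preimage_symm s]
  exact hs.preimage (LinearMap.continuous_of_finiteDimensional e.symm.toLinearMap)

private lemma card_nsmul_le_volume {ι : Type*} (F : Finset ι) (U : ι → Set (Fin n → ℝ))
    (K : Set (Fin n → ℝ)) (hdisj : (F : Set ι).PairwiseDisjoint U)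
    (hmeas : ∀ i ∈ F, MeasurableSet (U i)) (hsub : ∀ i ∈ F, U i ⊆ K)
    (c : ℝ≥0∞) (hc : ∀ i ∈ F, c ≤ volume (U i)) :
    F.card • c ≤ volume K := by
  calc F.card • c = ∑ _i ∈ F, c := by rw [Finset.sum_const]
    _ ≤ ∑ i ∈ F, volume (U i) := Finset.sum_le_sum hc
    _ = volume (⋃ i ∈ F, U i) := (measure_biUnion_finset hdisj hmeas).symm
    _ ≤ volume K := measure_mono (Set.iUnion₂_subset hsub)


private lemma volume_l1_ball_lt (hn : 0 < n) :
    volume {x : Fin n → ℝ | ∑ j, |x j| < 1} = ENNReal.ofReal (2 ^ n / n.factorial) := by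
  have h := MeasureTheory.volume_sum_rpow_lt_one (Fin n) (p := 1) le_rfl
  simp only [Real.rpow_one] at h
  rw [h]
  congr 1
  rw [Fintype.card_fin]
  norm_num
  rw [Real.Gamma_nat_eq_factorial]

private lemma volume_l1_ball_le (hn : 0 < n) (r : ℝ) :
    volume {x : Fin n → ℝ | ∑ j, |x j| ≤ r}
      = ENNReal.ofReal r ^ n * ENNReal.ofReal (2 ^ n / n.factorial) := by
  haveI : Nonempty (Fin n) := ⟨⟨0, hn⟩⟩
  have h := MeasureTheory.volume_sum_rpow_le (Fin n) (p := 1) le_rfl r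
  simp only [one_div_one, Real.rpow_one] at h
  rw [h, Fintype.card_fin]
  congr 1
  rw [show (1:ℝ)+1 = 2 by norm_num, Real.Gamma_two,
    show ((n:ℝ)/1+1) = (n:ℝ)+1 by ring, Real.Gamma_nat_eq_factorial]
  norm_num

private def openSimplex (n : ℕ) : Set (Fin n → ℝ) :=
  {lam | (∀ k, 0 < lam k) ∧ ∑ k, lam k < 1}

private lemma isOpen_openSimplex : IsOpen (openSimplex n) := by
  have h1 : IsOpen {lam : Fin n → ℝ | ∀ k, 0 < lam k} := by
    have : {lam : Fin n → ℝ | ∀ k, 0 < lam k} = Set.pi Set.univ (fun _ => Set.Ioi (0:ℝ)) := by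
      ext lam; simp [Set.mem_pi]
    rw [this]
    exact isOpen_set_pi Set.finite_univ (fun _ _ => isOpen_Ioi)
  have h2 : IsOpen {lam : Fin n → ℝ | ∑ k, lam k < 1} :=
    isOpen_lt (by continuity) continuous_const
  exact h1.inter h2

private lemma volume_openSimplex_ge (hn : 0 < n) :
    ENNReal.ofReal (1 / n.factorial) ≤ volume (openSimplex n) := by
  -- ball ⊆ hyperplanes ∪ union of reflections of the simplex
  set Ball : Set (Fin n → ℝ) := {x | ∑ j, |x j| < 1} with hBall
  set N : Set (Fin n → ℝ) := ⋃ i : Fin n, {x | x i = 0} with hN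
  have hNnull : volume N = 0 := by
    rw [hN]
    refine measure_iUnion_null (fun i => ?_)
    have : {x : Fin n → ℝ | x i = 0} = (LinearMap.ker (LinearMap.proj (R := ℝ)
        (φ := fun _ : Fin n => ℝ) i) : Submodule ℝ (Fin n → ℝ)) := by
      ext x; simp [LinearMap.mem_ker]
    rw [this]
    apply Measure.addHaar_submodule
    intro htop
    have : (fun j : Fin n => if i = j then (1:ℝ) else 0) ∈ LinearMap.ker
        (LinearMap.proj (R := ℝ) (φ := fun _ : Fin n => ℝ) i) := by
      rw [htop]; trivial
    simp [LinearMap.mem_ker] at this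
  have hcover : Ball ⊆ N ∪ ⋃ c : Fin n → Bool,
      (Matrix.diagonal (fun i => if c i then (1:ℝ) else -1)).vecMulLinear '' openSimplex n := by
    intro x hx
    by_cases hz : ∃ i, x i = 0
    · left
      obtain ⟨i, hi⟩ := hz
      exact Set.mem_iUnion.mpr ⟨i, hi⟩
    · right
      push_neg at hz
      refine Set.mem_iUnion.mpr ⟨fun i => decide (0 < x i), ⟨fun i => |x i|, ⟨?_, ?_⟩, ?_⟩⟩
      · intro k
        exact abs_pos.mpr (hz k)
      · exact hx
      · funext j
        show ((fun i => |x i|) ᵥ* Matrix.diagonal _) j = x j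
        rw [Matrix.vecMul_diagonal]
        by_cases h : 0 < x j
        · simp [h, abs_of_pos h]
        · have hneg : x j < 0 := lt_of_le_of_ne (not_lt.mp h) (hz j)
          simp [h, abs_of_neg hneg]
  have hrefl : ∀ c : Fin n → Bool,
      volume ((Matrix.diagonal (fun i => if c i then (1:ℝ) else -1)).vecMulLinear ''
        openSimplex n) = volume (openSimplex n) := by
    intro c
    rw [volume_image_vecMulLinear]
    rw [Matrix.det_diagonal]
    rw [Finset.abs_prod]
    have : ∀ i ∈ Finset.univ, |if c i then (1:ℝ) else -1| = 1 := by
      intro i _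
      by_cases h : c i <;> simp [h]
    rw [Finset.prod_congr rfl this, Finset.prod_const_one, ENNReal.ofReal_one, one_mul]
  have hvol : volume Ball ≤ (2^n : ℕ) * volume (openSimplex n) := by
    calc volume Ball ≤ volume N + volume (⋃ c : Fin n → Bool,
          (Matrix.diagonal (fun i => if c i then (1:ℝ) else -1)).vecMulLinear ''
            openSimplex n) := le_trans (measure_mono hcover) (measure_union_le _ _)
      _ ≤ 0 + ∑' c : Fin n → Bool, volume ((Matrix.diagonal
            (fun i => if c i then (1:ℝ) else -1)).vecMulLinear '' openSimplex n) := by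
          rw [hNnull]; exact add_le_add le_rfl (measure_iUnion_le _)
      _ = ∑ c : Fin n → Bool, volume (openSimplex n) := by
          rw [zero_add, tsum_fintype]
          exact Finset.sum_congr rfl (fun c _ => hrefl c)
      _ = (2^n : ℕ) * volume (openSimplex n) := by
          rw [Finset.sum_const, Finset.card_univ, Fintype.card_fun, Fintype.card_bool,
            Fintype.card_fin, nsmul_eq_mul]
  rw [volume_l1_ball_lt hn] at hvol
  have h2 : ENNReal.ofReal ((2:ℝ)^n / n.factorial)
      = (2^n : ℕ) * ENNReal.ofReal (1 / n.factorial) := by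
    rw [← ENNReal.ofReal_natCast (2^n), ← ENNReal.ofReal_mul (by positivity)]
    congr 1
    push_cast
    ring
  rw [h2] at hvol
  have h2n : ((2^n : ℕ) : ℝ≥0∞) ≠ 0 := by
    simp
  have h2t : ((2^n : ℕ) : ℝ≥0∞) ≠ ⊤ := by
    simp [ENNReal.natCast_ne_top]
  exact (ENNReal.mul_le_mul_iff_right h2n h2t).mp hvol

section Gammas

variable {m n : ℕ} (A : Matrix (Fin m) (Fin n) ℤ)

private lemma entry_le_maxNorm (i : Fin m) (j : Fin n) : (A i j).natAbs ≤ maxNorm m n A :=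
  le_trans (Finset.le_sup (f := fun j' => (A i j').natAbs) (Finset.mem_univ j))
    (Finset.le_sup (f := fun i' => Finset.univ.sup fun j' => (A i' j').natAbs)
      (Finset.mem_univ i))

private lemma bdd_gammaRow_set : BddAbove {x : ℕ | ∃ (k : ℕ) (r : Fin k ↪ Fin m)
    (c : Fin k ↪ Fin n), (A.submatrix r c).det ≠ 0 ∧
    x = Finset.univ.sup fun i : Fin k => ∑ j : Fin k, (A.submatrix r c i j).natAbs} := by
  refine ⟨n * maxNorm m n A, ?_⟩
  rintro x ⟨k, r, c, hdet, rfl⟩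
  have hk : k ≤ n := by simpa using Fintype.card_le_of_embedding c
  refine Finset.sup_le fun i _ => ?_
  calc ∑ j : Fin k, (A.submatrix r c i j).natAbs
      ≤ ∑ _j : Fin k, maxNorm m n A :=
        Finset.sum_le_sum fun j _ => entry_le_maxNorm A (r i) (c j)
    _ = k * maxNorm m n A := by simp [Finset.sum_const, mul_comm]
    _ ≤ n * maxNorm m n A := Nat.mul_le_mul_right _ hk

private lemma bdd_gammaCol_set : BddAbove {x : ℕ | ∃ (k : ℕ) (r : Fin k ↪ Fin m)
    (c : Fin k ↪ Fin n), (A.submatrix r c).det ≠ 0 ∧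
    x = Finset.univ.sup fun j : Fin k => ∑ i : Fin k, (A.submatrix r c i j).natAbs} := by
  refine ⟨n * maxNorm m n A, ?_⟩
  rintro x ⟨k, r, c, hdet, rfl⟩
  have hk : k ≤ n := by simpa using Fintype.card_le_of_embedding c
  refine Finset.sup_le fun j _ => ?_
  calc ∑ i : Fin k, (A.submatrix r c i j).natAbs
      ≤ ∑ _i : Fin k, maxNorm m n A :=
        Finset.sum_le_sum fun i _ => entry_le_maxNorm A (r i) (c j)
    _ = k * maxNorm m n A := by simp [Finset.sum_const, mul_comm]
    _ ≤ n * maxNorm m n A := Nat.mul_le_mul_right _ hk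

private lemma bdd_wRS_set : BddAbove {x : ℕ | ∃ (k : ℕ) (r : Fin k ↪ Fin m)
    (c : Fin k ↪ Fin n), (A.submatrix r c).det ≠ 0 ∧
    x = Finset.univ.sup fun i : Fin k =>
      (Finset.univ.filter fun j : Fin k => A.submatrix r c i j ≠ 0).card} := by
  refine ⟨n, ?_⟩
  rintro x ⟨k, r, c, hdet, rfl⟩
  have hk : k ≤ n := by simpa using Fintype.card_le_of_embedding c
  refine Finset.sup_le fun i _ => ?_
  calc (Finset.univ.filter fun j : Fin k => A.submatrix r c i j ≠ 0).card
      ≤ (Finset.univ : Finset (Fin k)).card := Finset.card_filter_le _ _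
    _ ≤ n := by simpa using hk

private lemma bdd_wCS_set : BddAbove {x : ℕ | ∃ (k : ℕ) (r : Fin k ↪ Fin m)
    (c : Fin k ↪ Fin n), (A.submatrix r c).det ≠ 0 ∧
    x = Finset.univ.sup fun j : Fin k =>
      (Finset.univ.filter fun i : Fin k => A.submatrix r c i j ≠ 0).card} := by
  refine ⟨n, ?_⟩
  rintro x ⟨k, r, c, hdet, rfl⟩
  have hk : k ≤ n := by simpa using Fintype.card_le_of_embedding c
  refine Finset.sup_le fun j _ => ?_
  calc (Finset.univ.filter fun i : Fin k => A.submatrix r c i j ≠ 0).card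
      ≤ (Finset.univ : Finset (Fin k)).card := Finset.card_filter_le _ _
    _ ≤ n := by simpa using hk

private lemma nonempty_gamma_set : ({x : ℕ | ∃ (k : ℕ) (r : Fin k ↪ Fin m)
    (c : Fin k ↪ Fin n), (A.submatrix r c).det ≠ 0 ∧
    x = Finset.univ.sup fun i : Fin k => ∑ j : Fin k, (A.submatrix r c i j).natAbs}).Nonempty := by
  refine ⟨0, 0, Function.Embedding.ofIsEmpty, Function.Embedding.ofIsEmpty, ?_, ?_⟩
  · rw [Matrix.det_isEmpty]; exact one_ne_zero
  · simp

private lemma nonempty_gammaCol_set : ({x : ℕ | ∃ (k : ℕ) (r : Fin k ↪ Fin m)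
    (c : Fin k ↪ Fin n), (A.submatrix r c).det ≠ 0 ∧
    x = Finset.univ.sup fun j : Fin k => ∑ i : Fin k, (A.submatrix r c i j).natAbs}).Nonempty := by
  refine ⟨0, 0, Function.Embedding.ofIsEmpty, Function.Embedding.ofIsEmpty, ?_, ?_⟩
  · rw [Matrix.det_isEmpty]; exact one_ne_zero
  · simp

lemma gammaRow_le_mul : gammaRow m n A ≤ maxNorm m n A * weakRowSparsity m n A := by
  obtain ⟨k, r, c, hdet, hx⟩ := Nat.sSup_mem (nonempty_gamma_set A) (bdd_gammaRow_set A)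
  rw [gammaRow, hx]
  refine Finset.sup_le fun i _ => ?_
  have hsum : ∑ j : Fin k, (A.submatrix r c i j).natAbs
      = ∑ j ∈ Finset.univ.filter (fun j : Fin k => A.submatrix r c i j ≠ 0),
          (A.submatrix r c i j).natAbs := by
    rw [Finset.sum_filter_of_ne]
    intro j _ h
    simpa [Int.natAbs_eq_zero] using h
  rw [hsum]
  calc ∑ j ∈ Finset.univ.filter (fun j : Fin k => A.submatrix r c i j ≠ 0),
          (A.submatrix r c i j).natAbs
      ≤ (Finset.univ.filter (fun j : Fin k => A.submatrix r c i j ≠ 0)).card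
          • maxNorm m n A :=
        Finset.sum_le_card_nsmul _ _ _ (fun j _ => entry_le_maxNorm A (r i) (c j))
    _ = maxNorm m n A * (Finset.univ.filter (fun j : Fin k => A.submatrix r c i j ≠ 0)).card := by
        rw [smul_eq_mul, mul_comm]
    _ ≤ maxNorm m n A * weakRowSparsity m n A := by
        refine Nat.mul_le_mul_left _ ?_
        refine le_trans (Finset.le_sup (f := fun i' : Fin k =>
          (Finset.univ.filter fun j : Fin k => A.submatrix r c i' j ≠ 0).card)
          (Finset.mem_univ i)) ?_
        exact le_csSup (bdd_wRS_set A) ⟨k, r, c, hdet, rfl⟩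

lemma gammaCol_le_mul : gammaCol m n A ≤ maxNorm m n A * weakColSparsity m n A := by
  obtain ⟨k, r, c, hdet, hx⟩ := Nat.sSup_mem (nonempty_gammaCol_set A) (bdd_gammaCol_set A)
  rw [gammaCol, hx]
  refine Finset.sup_le fun j _ => ?_
  have hsum : ∑ i : Fin k, (A.submatrix r c i j).natAbs
      = ∑ i ∈ Finset.univ.filter (fun i : Fin k => A.submatrix r c i j ≠ 0),
          (A.submatrix r c i j).natAbs := by
    rw [Finset.sum_filter_of_ne]
    intro i _ h
    simpa [Int.natAbs_eq_zero] using h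
  rw [hsum]
  calc ∑ i ∈ Finset.univ.filter (fun i : Fin k => A.submatrix r c i j ≠ 0),
          (A.submatrix r c i j).natAbs
      ≤ (Finset.univ.filter (fun i : Fin k => A.submatrix r c i j ≠ 0)).card
          • maxNorm m n A :=
        Finset.sum_le_card_nsmul _ _ _ (fun i _ => entry_le_maxNorm A (r i) (c j))
    _ = maxNorm m n A * (Finset.univ.filter (fun i : Fin k => A.submatrix r c i j ≠ 0)).card := by
        rw [smul_eq_mul, mul_comm]
    _ ≤ maxNorm m n A * weakColSparsity m n A := by
        refine Nat.mul_le_mul_left _ ?_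
        refine le_trans (Finset.le_sup (f := fun j' : Fin k =>
          (Finset.univ.filter fun i : Fin k => A.submatrix r c i j' ≠ 0).card)
          (Finset.mem_univ j)) ?_
        exact le_csSup (bdd_wCS_set A) ⟨k, r, c, hdet, rfl⟩

-- column sums of a nonsingular n×n row-submatrix are at most gammaCol
lemma colsum_le_gammaCol (r : Fin n ↪ Fin m)
    (hdet : (A.submatrix r (Function.Embedding.refl (Fin n))).det ≠ 0) (j : Fin n) :
    ∑ k, (A (r k) j).natAbs ≤ gammaCol m n A := by
  refine le_trans ?_ (le_csSup (bdd_gammaCol_set A)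
    ⟨n, r, Function.Embedding.refl (Fin n), hdet, rfl⟩)
  exact Finset.le_sup (f := fun j' : Fin n => ∑ i : Fin n,
    (A.submatrix r (Function.Embedding.refl (Fin n)) i j').natAbs) (Finset.mem_univ j)

lemma rowsum_le_gammaRow (r : Fin n ↪ Fin m)
    (hdet : (A.submatrix r (Function.Embedding.refl (Fin n))).det ≠ 0) (k : Fin n) :
    ∑ j, (A (r k) j).natAbs ≤ gammaRow m n A := by
  refine le_trans ?_ (le_csSup (bdd_gammaRow_set A)
    ⟨n, r, Function.Embedding.refl (Fin n), hdet, rfl⟩)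
  exact Finset.le_sup (f := fun i : Fin n => ∑ j : Fin n,
    (A.submatrix r (Function.Embedding.refl (Fin n)) i j).natAbs) (Finset.mem_univ k)

end Gammas

private theorem main_proof (m n : ℕ) (A : Matrix (Fin m) (Fin n) ℤ)
    (hrank : (A.map (Int.cast : ℤ → ℝ)).rank = n) (b : Fin m → ℚ) :
    (Set.extremePoints ℝ
        {x : Fin n → ℝ | ∀ i, ∑ j, (A i j : ℝ) * x j ≤ (b i : ℝ)}).Finite ∧
    (Set.extremePoints ℝ
        {x : Fin n → ℝ | ∀ i, ∑ j, (A i j : ℝ) * x j ≤ (b i : ℝ)}).ncard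
      ≤ 2 ^ n * min (gammaRow m n A) (gammaCol m n A) ^ n ∧
    2 ^ n * min (gammaRow m n A) (gammaCol m n A) ^ n
      ≤ (2 * maxNorm m n A) ^ n * min (weakRowSparsity m n A) (weakColSparsity m n A) ^ n := by
  classical
  set Mr : Matrix (Fin m) (Fin n) ℝ := A.map (Int.cast : ℤ → ℝ) with hMr
  set cb : Fin m → ℝ := fun i => (b i : ℝ) with hcb
  have hnm : n ≤ m := by
    have h1 := Matrix.rank_le_card_height (A.map (Int.cast : ℤ → ℝ))
    rw [hrank] at h1
    simpa using h1
  have hPeq : {x : Fin n → ℝ | ∀ i, ∑ j, (A i j : ℝ) * x j ≤ (b i : ℝ)}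
      = {x : Fin n → ℝ | ∀ i, Mr i ⬝ᵥ x ≤ cb i} := by
    ext x
    simp only [Set.mem_setOf_eq, hMr, hcb, Matrix.map_apply, dotProduct]
  set E := Set.extremePoints ℝ
    {x : Fin n → ℝ | ∀ i, ∑ j, (A i j : ℝ) * x j ≤ (b i : ℝ)} with hEdef
  have hexists : ∀ v : Fin n → ℝ, ∃ r : Fin n ↪ Fin m, v ∈ E →
      ((Mr.submatrix r id).det ≠ 0 ∧ ∀ k, Mr (r k) ⬝ᵥ v = cb (r k)) := by
    intro v
    by_cases hv : v ∈ E
    · have hv' : v ∈ Set.extremePoints ℝ {x : Fin n → ℝ | ∀ i, Mr i ⬝ᵥ x ≤ cb i} := by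
        rw [hEdef, hPeq] at hv; exact hv
      have hspan := span_tight_rows Mr cb hv'
      obtain ⟨r, hrT, hdet⟩ := exists_invertible_subsystem Mr _ hspan
      exact ⟨r, fun _ => ⟨hdet, fun k => hrT k⟩⟩
    · exact ⟨Fin.castLEEmb hnm, fun h => absurd h hv⟩
  choose rr hrr using hexists
  have hmemP : ∀ v ∈ E, ∀ i, Mr i ⬝ᵥ v ≤ cb i := by
    intro v hv
    have hx : v ∈ {x : Fin n → ℝ | ∀ i, Mr i ⬝ᵥ x ≤ cb i} := by
      rw [← hPeq]; exact hv.1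
    exact hx
  have huniq : ∀ (rv : Fin n ↪ Fin m), (Mr.submatrix rv id).det ≠ 0 →
      ∀ v w : Fin n → ℝ, (∀ k, Mr (rv k) ⬝ᵥ v = cb (rv k)) →
        (∀ k, Mr (rv k) ⬝ᵥ w = cb (rv k)) → v = w := by
    intro rv hdet v w htv htw
    have hU : IsUnit (Mr.submatrix rv id) := (Matrix.isUnit_iff_isUnit_det _).mpr hdet.isUnit
    apply Matrix.mulVec_injective_iff_isUnit.mpr hU
    funext k
    show Mr (rv k) ⬝ᵥ v = Mr (rv k) ⬝ᵥ w
    rw [htv k, htw k]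
  have hFin : E.Finite := by
    have hinj : Function.Injective (fun v : E => (rr v : Fin n → Fin m)) := by
      intro v w h
      apply Subtype.ext
      have h' : rr (v : Fin n → ℝ) = rr (w : Fin n → ℝ) := DFunLike.coe_injective h
      obtain ⟨hdv, htv⟩ := hrr v v.2
      obtain ⟨hdw, htw⟩ := hrr w w.2
      exact huniq (rr (w : Fin n → ℝ)) hdw _ _ (h' ▸ htv) htw
    exact Set.finite_coe_iff.mp (Finite.of_injective _ hinj)
  set t : Finset (Fin n → ℝ) := hFin.toFinset with ht
  have hncard : E.ncard = t.card := Set.ncard_eq_toFinset_card E hFin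
  have hdetcast : ∀ rv : Fin n ↪ Fin m, (Mr.submatrix rv id).det
      = (((A.submatrix rv (Function.Embedding.refl (Fin n))).det : ℤ) : ℝ) := by
    intro rv
    have heq : Mr.submatrix rv id = ((Int.castRingHom ℝ).mapMatrix
        (A.submatrix rv (Function.Embedding.refl (Fin n)))) := by
      ext i j
      simp [hMr, Matrix.map_apply, RingHom.mapMatrix_apply]
    rw [heq, ← RingHom.map_det]
    rfl
  have hdet1 : ∀ v ∈ t, ((1:ℝ≥0∞) ≤ ENNReal.ofReal |(Mr.submatrix (rr v) id).det|
      ∧ (A.submatrix (rr v) (Function.Embedding.refl (Fin n))).det ≠ 0)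
      ∧ (Mr.submatrix (rr v) id).det ≠ 0 := by
    intro v hv
    have hvE : v ∈ E := hFin.mem_toFinset.mp hv
    obtain ⟨hd, -⟩ := hrr v hvE
    have hz : (A.submatrix (rr v) (Function.Embedding.refl (Fin n))).det ≠ 0 := by
      intro h0; apply hd; rw [hdetcast, h0]; simp
    refine ⟨⟨?_, hz⟩, hd⟩
    rw [← ENNReal.ofReal_one]
    apply ENNReal.ofReal_le_ofReal
    rw [hdetcast, ← Int.cast_abs]
    exact_mod_cast Int.one_le_abs hz
  have hdisjPos : (↑t : Set (Fin n → ℝ)).PairwiseDisjoint (fun v =>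
      (Mr.submatrix (rr v) id).vecMulLinear '' {lam : Fin n → ℝ | ∀ k, 0 < lam k}) := by
    intro v hv w hw hvw
    have hvE : v ∈ E := hFin.mem_toFinset.mp (Finset.mem_coe.mp hv)
    have hwE : w ∈ E := hFin.mem_toFinset.mp (Finset.mem_coe.mp hw)
    obtain ⟨hdv, htv⟩ := hrr v hvE
    obtain ⟨hdw, htw⟩ := hrr w hwE
    exact cone_disjoint Mr cb hvw (hmemP v hvE) (hmemP w hwE) (rr v) (rr w) hdv htv htw
  -- coordinates of points in the cones
  have hcoord : ∀ (v : Fin n → ℝ) (lam : Fin n → ℝ) (j : Fin n),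
      ((Mr.submatrix (rr v) id).vecMulLinear lam) j = ∑ k, lam k * (A (rr v k) j : ℝ) := by
    intro v lam j
    show ((lam ᵥ* Mr.submatrix (rr v) id)) j = _
    simp [Matrix.vecMul, dotProduct, hMr, Matrix.map_apply]
  -- the ℓ∞ bound
  have hcardCol : t.card ≤ (2 * gammaCol m n A) ^ n := by
    set g : ℝ := (gammaCol m n A : ℝ) with hg
    have hg0 : 0 ≤ g := by rw [hg]; positivity
    have hcube : IsOpen (Set.pi Set.univ fun _ : Fin n => Set.Ioo (0:ℝ) 1) :=
      isOpen_set_pi Set.finite_univ (fun _ _ => isOpen_Ioo)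
    have hmain := card_nsmul_le_volume t
      (fun v => (Mr.submatrix (rr v) id).vecMulLinear ''
        (Set.pi Set.univ fun _ => Set.Ioo (0:ℝ) 1))
      (Set.pi Set.univ fun _ : Fin n => Set.Icc (-g) g)
      (fun v hv w hw hvw => (hdisjPos hv hw hvw).mono
        (Set.image_mono (fun lam h k => (h k (Set.mem_univ k)).1))
        (Set.image_mono (fun lam h k => (h k (Set.mem_univ k)).1)))
      (fun v hv => (isOpen_image_vecMulLinear _ (hdet1 v hv).2 hcube).measurableSet)
      ?_ 1 ?_
    · have hKvol : volume (Set.pi Set.univ fun _ : Fin n => Set.Icc (-g) g)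
          = ENNReal.ofReal (2*g) ^ n := by
        rw [volume_pi_pi]
        have h2g : g - -g = 2*g := by ring
        simp only [Real.volume_Icc, h2g]
        rw [Finset.prod_const, Finset.card_univ, Fintype.card_fin]
      rw [hKvol, nsmul_eq_mul, mul_one] at hmain
      have hconv : ENNReal.ofReal (2*g) ^ n = (((2 * gammaCol m n A) ^ n : ℕ) : ℝ≥0∞) := by
        rw [← ENNReal.ofReal_pow (by positivity)]
        have hcast : ((2:ℝ)*g)^n = (((2 * gammaCol m n A)^n : ℕ) : ℝ) := by
          rw [hg]; push_cast; ring
        rw [hcast, ENNReal.ofReal_natCast]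
      rw [hconv] at hmain
      exact_mod_cast hmain
    · -- subset of the cube
      rintro v hv y ⟨lam, hlam, rfl⟩
      intro j _
      rw [hcoord v lam j]
      have habs : |∑ k, lam k * (A (rr v k) j : ℝ)| ≤ g := by
        calc |∑ k, lam k * (A (rr v k) j : ℝ)|
            ≤ ∑ k, |lam k * (A (rr v k) j : ℝ)| := Finset.abs_sum_le_sum_abs _ _
          _ ≤ ∑ k, |(A (rr v k) j : ℝ)| := by
              refine Finset.sum_le_sum fun k _ => ?_
              rw [abs_mul]
              have h1 : |lam k| ≤ 1 := by
                have h2 := hlam k (Set.mem_univ k)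
                rw [abs_of_pos h2.1]
                exact h2.2.le
              exact mul_le_of_le_one_left (abs_nonneg _) h1
          _ = ((∑ k, (A (rr v k) j).natAbs : ℕ) : ℝ) := by
              push_cast
              refine Finset.sum_congr rfl fun k _ => ?_
              rw [Nat.cast_natAbs, Int.cast_abs]
          _ ≤ g := by
              rw [hg]
              exact_mod_cast colsum_le_gammaCol A (rr v) (hdet1 v hv).1.2 j
      exact Set.mem_Icc.mpr (abs_le.mp habs)
    · -- volume lower bound
      intro v hv
      rw [volume_image_vecMulLinear, volume_pi_pi]
      simp only [Real.volume_Ioo, sub_zero, ENNReal.ofReal_one, Finset.prod_const_one, mul_one]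
      exact (hdet1 v hv).1.1
  -- the ℓ1 bound, for n positive
  have hcardRow : 0 < n → t.card ≤ (2 * gammaRow m n A) ^ n := by
    intro hn
    set g : ℝ := (gammaRow m n A : ℝ) with hg
    have hg0 : 0 ≤ g := by rw [hg]; positivity
    have hmain := card_nsmul_le_volume t
      (fun v => (Mr.submatrix (rr v) id).vecMulLinear '' openSimplex n)
      {y : Fin n → ℝ | ∑ j, |y j| ≤ g}
      (fun v hv w hw hvw => (hdisjPos hv hw hvw).mono
        (Set.image_mono (fun lam h => h.1))
        (Set.image_mono (fun lam h => h.1)))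
      (fun v hv => (isOpen_image_vecMulLinear _ (hdet1 v hv).2 isOpen_openSimplex).measurableSet)
      ?_ (ENNReal.ofReal (1 / n.factorial)) ?_
    · rw [volume_l1_ball_le hn g] at hmain
      have hconv : ENNReal.ofReal g ^ n * ENNReal.ofReal (2 ^ n / n.factorial)
          = (((2 * gammaRow m n A) ^ n : ℕ) : ℝ≥0∞) * ENNReal.ofReal (1 / n.factorial) := by
        rw [← ENNReal.ofReal_pow hg0, ← ENNReal.ofReal_mul (by positivity)]
        have hcast : g ^ n * ((2:ℝ) ^ n / n.factorial)
            = ((((2 * gammaRow m n A) ^ n : ℕ) : ℝ)) * (1 / n.factorial) := by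
          rw [hg]; push_cast; ring
        rw [hcast, ENNReal.ofReal_mul (by positivity), ENNReal.ofReal_natCast]
      rw [hconv, nsmul_eq_mul] at hmain
      have hne0 : ENNReal.ofReal (1 / n.factorial) ≠ 0 :=
        (ENNReal.ofReal_pos.mpr (by positivity)).ne'
      have hnetop : ENNReal.ofReal (1 / n.factorial) ≠ ⊤ := ENNReal.ofReal_ne_top
      have := (ENNReal.mul_le_mul_iff_left hne0 hnetop).mp hmain
      exact_mod_cast this
    · -- subset of the ℓ1 ball
      rintro v hv y ⟨lam, hlam, rfl⟩
      show ∑ j, |((Mr.submatrix (rr v) id).vecMulLinear lam) j| ≤ g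
      calc ∑ j, |((Mr.submatrix (rr v) id).vecMulLinear lam) j|
          ≤ ∑ j, ∑ k, |lam k * (A (rr v k) j : ℝ)| := by
            refine Finset.sum_le_sum fun j _ => ?_
            rw [hcoord v lam j]
            exact Finset.abs_sum_le_sum_abs _ _
        _ = ∑ k, ∑ j, |lam k * (A (rr v k) j : ℝ)| := Finset.sum_comm
        _ = ∑ k, lam k * ∑ j, |(A (rr v k) j : ℝ)| := by
            refine Finset.sum_congr rfl fun k _ => ?_
            rw [Finset.mul_sum]
            refine Finset.sum_congr rfl fun j _ => ?_
            rw [abs_mul, abs_of_pos (hlam.1 k)]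
        _ ≤ ∑ k, lam k * g := by
            refine Finset.sum_le_sum fun k _ => ?_
            refine mul_le_mul_of_nonneg_left ?_ (hlam.1 k).le
            have : ∑ j, |(A (rr v k) j : ℝ)| = ((∑ j, (A (rr v k) j).natAbs : ℕ) : ℝ) := by
              push_cast
              refine Finset.sum_congr rfl fun j _ => ?_
              rw [Nat.cast_natAbs, Int.cast_abs]
            rw [this, hg]
            exact_mod_cast rowsum_le_gammaRow A (rr v) (hdet1 v hv).1.2 k
        _ = (∑ k, lam k) * g := by rw [Finset.sum_mul]
        _ ≤ 1 * g := mul_le_mul_of_nonneg_right hlam.2.le hg0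
        _ = g := one_mul g
    · -- volume lower bound
      intro v hv
      rw [volume_image_vecMulLinear]
      calc ENNReal.ofReal (1 / n.factorial) ≤ volume (openSimplex n) := volume_openSimplex_ge hn
        _ ≤ ENNReal.ofReal |(Mr.submatrix (rr v) id).det| * volume (openSimplex n) :=
            le_mul_of_one_le_left (by positivity) (hdet1 v hv).1.1
  refine ⟨hFin, ?_, ?_⟩
  · -- cardinality bound
    rw [hncard]
    rcases Nat.eq_zero_or_pos n with hn | hn
    · subst hn
      simpa using hcardCol
    · have h1 := hcardRow hn
      have heq : 2 ^ n * min (gammaRow m n A) (gammaCol m n A) ^ n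
          = min ((2 * gammaRow m n A) ^ n) ((2 * gammaCol m n A) ^ n) := by
        rcases le_total (gammaRow m n A) (gammaCol m n A) with h | h
        · rw [min_eq_left h, min_eq_left
            (Nat.pow_le_pow_left (Nat.mul_le_mul_left 2 h) n), mul_pow]
        · rw [min_eq_right h, min_eq_right
            (Nat.pow_le_pow_left (Nat.mul_le_mul_left 2 h) n), mul_pow]
      rw [heq]
      exact le_min h1 hcardCol
  · -- comparison with sparsity
    have hmin : min (gammaRow m n A) (gammaCol m n A)
        ≤ maxNorm m n A * min (weakRowSparsity m n A) (weakColSparsity m n A) := by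
      rcases le_total (weakRowSparsity m n A) (weakColSparsity m n A) with h | h
      · rw [min_eq_left h]
        exact (min_le_left _ _).trans (gammaRow_le_mul A)
      · rw [min_eq_right h]
        exact (min_le_right _ _).trans (gammaCol_le_mul A)
    calc 2 ^ n * min (gammaRow m n A) (gammaCol m n A) ^ n
        ≤ 2 ^ n * (maxNorm m n A
            * min (weakRowSparsity m n A) (weakColSparsity m n A)) ^ n :=
          Nat.mul_le_mul_left _ (Nat.pow_le_pow_left hmin n)
      _ = (2 * maxNorm m n A) ^ n
            * min (weakRowSparsity m n A) (weakColSparsity m n A) ^ n := by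
          rw [mul_pow, mul_pow, mul_assoc]

end AuxPart

/-- For an `m×n` integer matrix `A` of rank `n`, `b ∈ ℚᵐ`, and
`P = {x ∈ ℝⁿ : A x ≤ b}`, the set of vertices of `P` is finite and
`|vertices(P)| ≤ 2ⁿ · (min{γ₁(A), γ_∞(A)})ⁿ ≤ (2‖A‖_max)ⁿ · s(A)ⁿ`. -/
theorem card_vertices_le_sparse_bound (m n : ℕ) (A : Matrix (Fin m) (Fin n) ℤ)
    (hrank : (A.map (Int.cast : ℤ → ℝ)).rank = n) (b : Fin m → ℚ) :
    (Set.extremePoints ℝ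
        {x : Fin n → ℝ | ∀ i, ∑ j, (A i j : ℝ) * x j ≤ (b i : ℝ)}).Finite ∧
    (Set.extremePoints ℝ
        {x : Fin n → ℝ | ∀ i, ∑ j, (A i j : ℝ) * x j ≤ (b i : ℝ)}).ncard
      ≤ 2 ^ n * min (gammaRow m n A) (gammaCol m n A) ^ n ∧
    2 ^ n * min (gammaRow m n A) (gammaCol m n A) ^ n
      ≤ (2 * maxNorm m n A) ^ n * min (weakRowSparsity m n A) (weakColSparsity m n A) ^ n := by
  exact main_proof m n A hrank b
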